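/- In a dual weak brace S, for all a, b ∈ S and every idempotent e, (e + a) · b = e · b + a · b, where a · b := -a + a ∘ b - b. -/

import Mathlib

/-- A weak brace: `(S,+)` and `(S,∘)` are inverse semigroups satisfying
`a ∘ (b + c) = a ∘ b - a + a ∘ c` and `a ∘ a⁻ = -a + a`. -/
class WeakBrace (S : Type*) where
  add : S → S → S
  mul : S → S → S
  neg : S → S
  inv : S → S
  add_assoc : ∀ a b c : S, add (add a b) c = add a (add b c)
  mul_assoc : ∀ a b c : S, mul (mul a b) c = mul a (mul b c)
  add_reg : ∀ a : S, add (add a (neg a)) a = a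
  neg_reg : ∀ a : S, add (add (neg a) a) (neg a) = neg a
  neg_unique : ∀ a x : S, add (add a x) a = a → add (add x a) x = x → x = neg a
  mul_reg : ∀ a : S, mul (mul a (inv a)) a = a
  inv_reg : ∀ a : S, mul (mul (inv a) a) (inv a) = inv a
  inv_unique : ∀ a x : S, mul (mul a x) a = a → mul (mul x a) x = x → x = inv a
  distrib : ∀ a b c : S, mul a (add b c) = add (add (mul a b) (neg a)) (mul a c)
  link : ∀ a : S, mul a (inv a) = add (neg a) a

/-- A dual weak brace: a weak brace whose multiplicative semigroup is Clifford. -/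
class DualWeakBrace (S : Type*) extends WeakBrace S where
  clifford : ∀ a : S, WeakBrace.mul a (WeakBrace.inv a) = WeakBrace.mul (WeakBrace.inv a) a

namespace WeakBrace

variable {S : Type*} [WeakBrace S]

/-- `λ_a(b) = -a + a ∘ b`. -/
def lam (a b : S) : S := add (neg a) (mul a b)

/-- `ρ_b(a) = (-a + a ∘ b)⁻ ∘ a ∘ b`. -/
def rho (b a : S) : S := mul (mul (inv (lam a b)) a) b

/-- `a · b = -a + a ∘ b - b`. -/
def cdot (a b : S) : S := add (add (neg a) (mul a b)) (neg b)

/-- `a⁰ = a - a`. -/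
def sq (a : S) : S := add a (neg a)

/-- Additive idempotent (the sets of idempotents of `+` and `∘` coincide). -/
def IsIdem (e : S) : Prop := add e e = e

/-- `[a,b]₊ = -a - b + a + b`. -/
def brkt (a b : S) : S := add (add (add (neg a) (neg b)) a) b

/-- `I` is a full inverse subsemigroup of `(S,+)`. -/
def IsFullAddSub (I : Set S) : Prop :=
  (∀ e : S, IsIdem e → e ∈ I) ∧ (∀ x ∈ I, ∀ y ∈ I, add x y ∈ I) ∧ (∀ x ∈ I, neg x ∈ I)

/-- `I` is a normal subsemigroup of `(S,+)`. -/
def IsNormalAdd (I : Set S) : Prop :=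
  IsFullAddSub I ∧ ∀ a : S, ∀ x ∈ I, add (add (neg a) x) a ∈ I

/-- `I` is a normal subsemigroup of `(S,∘)`. -/
def IsNormalMul (I : Set S) : Prop :=
  (∀ e : S, IsIdem e → e ∈ I) ∧ (∀ x ∈ I, ∀ y ∈ I, mul x y ∈ I) ∧ (∀ x ∈ I, inv x ∈ I) ∧
    ∀ a : S, ∀ x ∈ I, mul (mul (inv a) x) a ∈ I

/-- `I` is a left ideal of the weak brace `S`. -/
def IsLeftIdeal (I : Set S) : Prop :=
  IsFullAddSub I ∧ ∀ a : S, ∀ x ∈ I, lam a x ∈ I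

/-- `I` is an ideal of the weak brace `S`. -/
def IsIdeal (I : Set S) : Prop :=
  IsNormalAdd I ∧ (∀ a : S, ∀ x ∈ I, lam a x ∈ I) ∧ IsNormalMul I

/-- The socle `Soc(S)`. -/
def Soc (S : Type*) [WeakBrace S] : Set S :=
  {a | ∀ b : S, add a b = mul a b ∧ add a b = add b a}

/-- The annihilator `Ann(S)`. -/
def Ann (S : Type*) [WeakBrace S] : Set S :=
  {a | ∀ b : S, add a b = add b a ∧ add a b = mul a b ∧ mul a b = mul b a}

/-- The congruence `a ∼_I b ⟺ a⁰ = b⁰ and -a + b ∈ I` associated to an ideal `I`. -/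
def simI (I : Set S) (a b : S) : Prop := sq a = sq b ∧ add (neg a) b ∈ I

/-- Membership in the inverse subsemigroup of `(S,+)` generated by a set `X`. -/
inductive genAdd (X : Set S) : S → Prop
  | base : ∀ x ∈ X, genAdd X x
  | add : ∀ a b : S, genAdd X a → genAdd X b → genAdd X (add a b)
  | neg : ∀ a : S, genAdd X a → genAdd X (neg a)

/-- `X · Y`: the additive inverse subsemigroup generated by the elements `x · y`. -/
def cdotSet (X Y : Set S) : Set S :=
  {s | genAdd {z | ∃ x ∈ X, ∃ y ∈ Y, z = cdot x y} s}

/-- `S^(n)` for `n ≥ 1`: `S^(1) = S`, `S^(n+1) = S^(n) · S`. -/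
def Spow (S : Type*) [WeakBrace S] : ℕ → Set S
  | 0 => Set.univ
  | 1 => Set.univ
  | (n+2) => cdotSet (Spow S (n+1)) Set.univ

end WeakBrace


structure InvSg {S : Type*} (op : S → S → S) (iv : S → S) : Prop where
  assoc : ∀ a b c : S, op (op a b) c = op a (op b c)
  rg : ∀ a : S, op (op a (iv a)) a = a
  rg' : ∀ a : S, op (op (iv a) a) (iv a) = iv a
  unq : ∀ a x : S, op (op a x) a = a → op (op x a) x = x → x = iv a

namespace InvSg
variable {S : Type*} {op : S → S → S} {iv : S → S}

theorem iv_iv (h : InvSg op iv) (a : S) : iv (iv a) = a :=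
  (h.unq (iv a) a (h.rg' a) (h.rg a)).symm

theorem iv_idem (h : InvSg op iv) {e : S} (he : op e e = e) : iv e = e :=
  (h.unq e e (by rw [he, he]) (by rw [he, he])).symm

theorem rg₁ (h : InvSg op iv) (a : S) : op a (op (iv a) a) = a := by
  rw [← h.assoc]; exact h.rg a

theorem rg₁' (h : InvSg op iv) (a : S) : op (iv a) (op a (iv a)) = iv a := by
  rw [← h.assoc]; exact h.rg' a

theorem rg_cont (h : InvSg op iv) (a y : S) : op a (op (iv a) (op a y)) = op a y := by
  rw [← h.assoc, ← h.assoc, h.rg]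

theorem rg'_cont (h : InvSg op iv) (a y : S) : op (iv a) (op a (op (iv a) y)) = op (iv a) y := by
  rw [← h.assoc, ← h.assoc, h.rg']

theorem idem_op_iv (h : InvSg op iv) (a : S) : op (op a (iv a)) (op a (iv a)) = op a (iv a) := by
  rw [← h.assoc, h.rg]

theorem idem_iv_op (h : InvSg op iv) (a : S) : op (op (iv a) a) (op (iv a) a) = op (iv a) a := by
  rw [← h.assoc, h.rg']

theorem idem_cont (h : InvSg op iv) {e : S} (he : op e e = e) (y : S) :
    op e (op e y) = op e y := by rw [← h.assoc, he]

theorem idem_op (h : InvSg op iv) {e f : S} (he : op e e = e) (hf : op f f = f) :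
    op (op e f) (op e f) = op e f := by
  set x := iv (op e f) with hxdef
  have A : op (op (op e f) (op (op f x) e)) (op e f) = op e f := by
    have t := h.rg (op e f)
    simp only [h.assoc] at t ⊢
    rw [h.idem_cont hf, h.idem_cont he]
    exact t
  have B : op (op (op (op f x) e) (op e f)) (op (op f x) e) = op (op f x) e := by
    have t := h.rg'_cont (op e f) e
    simp only [h.assoc] at t ⊢
    rw [h.idem_cont he, h.idem_cont hf, t]
  have key : op (op f x) e = x := h.unq (op e f) (op (op f x) e) A B
  have hx : op x x = x := by
    have t := h.rg'_cont (op e f) e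
    simp only [h.assoc] at t
    calc op x x = op (op (op f x) e) (op (op f x) e) := by rw [key]
    _ = op (op f x) e := by simp only [h.assoc]; rw [t]
    _ = x := key
  have hefx : op e f = x := by
    rw [← h.iv_iv (op e f), ← hxdef, h.iv_idem hx]
  rw [hefx]; exact hx

theorem idem_comm (h : InvSg op iv) {e f : S} (he : op e e = e) (hf : op f f = f) :
    op e f = op f e := by
  have hef := h.idem_op he hf
  have hfe := h.idem_op hf he
  have C1 : op (op (op e f) (op f e)) (op e f) = op e f := by
    have t := hef
    simp only [h.assoc] at t ⊢
    rw [h.idem_cont hf, h.idem_cont he]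
    exact t
  have C2 : op (op (op f e) (op e f)) (op f e) = op f e := by
    have t := hfe
    simp only [h.assoc] at t ⊢
    rw [h.idem_cont he, h.idem_cont hf]
    exact t
  have := h.unq (op e f) (op f e) C1 C2
  rw [this, h.iv_idem hef]

theorem iv_op (h : InvSg op iv) (a b : S) : iv (op a b) = op (iv b) (iv a) := by
  have comm := h.idem_comm (h.idem_op_iv b) (h.idem_iv_op a)
  have t : ∀ z, op b (op (iv b) (op (iv a) (op a z))) = op (iv a) (op a (op b (op (iv b) z))) := by
    intro z
    have := congrArg (fun w => op w z) comm
    simp only [h.assoc] at this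
    exact this
  have D1 : op (op (op a b) (op (iv b) (iv a))) (op a b) = op a b := by
    simp only [h.assoc]
    rw [t b, h.rg_cont, h.rg₁]
  have D2 : op (op (op (iv b) (iv a)) (op a b)) (op (iv b) (iv a)) = op (iv b) (iv a) := by
    simp only [h.assoc]
    rw [← t (iv a), h.rg'_cont, h.rg₁']
  exact (h.unq (op a b) (op (iv b) (iv a)) D1 D2).symm

theorem central (h : InvSg op iv) (cliff : ∀ a : S, op a (iv a) = op (iv a) a)
    {e : S} (he : op e e = e) (a : S) : op e a = op a e := by
  have hive : iv e = e := h.iv_idem he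
  have hc := cliff (op a e)
  rw [h.iv_op, hive] at hc
  -- hc : op (op a e) (op e (iv a)) = op (op e (iv a)) (op a e)
  have comm2 : op (op (iv a) a) e = op e (op (iv a) a) := h.idem_comm (h.idem_iv_op a) he
  have star1 : op a (op e (iv a)) = op e (op (iv a) a) := by
    have lhs : op (op a e) (op e (iv a)) = op a (op e (iv a)) := by
      simp only [h.assoc]; rw [h.idem_cont he]
    have rhs : op (op e (iv a)) (op a e) = op e (op (iv a) a) := by
      have t := congrArg (fun w => op e w) comm2
      simp only [h.assoc] at t ⊢
      rw [t]
      exact h.idem_cont he _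
    rw [lhs, rhs] at hc
    exact hc
  have s1 : op a (op (op (iv a) a) e) = op a e := by
    rw [← h.assoc, h.rg₁]
  symm
  calc op a e = op a (op (op (iv a) a) e) := s1.symm
    _ = op a (op e (op (iv a) a)) := by rw [comm2]
    _ = op (op a (op e (iv a))) a := by rw [h.assoc, h.assoc]
    _ = op (op e (op (iv a) a)) a := by rw [star1]
    _ = op (op e (op a (iv a))) a := by rw [← cliff a]
    _ = op e a := by rw [h.assoc, h.rg]

end InvSg

namespace WBAux
open WeakBrace

theorem addSg (S : Type*) [WeakBrace S] :
    InvSg (WeakBrace.add : S → S → S) WeakBrace.neg :=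
  ⟨WeakBrace.add_assoc, WeakBrace.add_reg, WeakBrace.neg_reg, WeakBrace.neg_unique⟩

theorem mulSg (S : Type*) [WeakBrace S] :
    InvSg (WeakBrace.mul : S → S → S) WeakBrace.inv :=
  ⟨WeakBrace.mul_assoc, WeakBrace.mul_reg, WeakBrace.inv_reg, WeakBrace.inv_unique⟩

variable {S : Type*} [WeakBrace S]

theorem neg_idem {e : S} (he : add e e = e) : neg e = e := (addSg S).iv_idem he

theorem mul_idem {e : S} (he : add e e = e) : mul e e = e := by
  have h1 : mul e (inv e) = e := by rw [WeakBrace.link, neg_idem he, he]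
  have h2 := WeakBrace.mul_reg e
  rw [h1] at h2
  exact h2

theorem add_idem_of_mul {e : S} (hm : mul e e = e) : add e e = e := by
  have hinv : inv e = e := (mulSg S).iv_idem hm
  have t : add (neg e) e = e := by rw [← WeakBrace.link e, hinv]; exact hm
  calc add e e = add e (add (neg e) e) := by rw [t]
    _ = e := by rw [← WeakBrace.add_assoc, WeakBrace.add_reg]

theorem inv_idem {e : S} (he : add e e = e) : inv e = e := (mulSg S).iv_idem (mul_idem he)


theorem idem_mul_eq_add {e f : S} (he : add e e = e) (hf : add f f = f) :
    mul e f = add e f := by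
  have hne : neg e = e := neg_idem he
  have hnf : neg f = f := neg_idem hf
  have me : mul e e = e := mul_idem he
  have mf : mul f f = f := mul_idem hf
  have comm_m : mul e f = mul f e := (mulSg S).idem_comm me mf
  have gm : mul (mul e f) (mul e f) = mul e f := (mulSg S).idem_op me mf
  have ga : add (mul e f) (mul e f) = mul e f := add_idem_of_mul gm
  have t1 : mul e f = add (add (mul e f) e) (mul e f) := by
    have t := WeakBrace.distrib e f f
    rw [hf, hne] at t
    exact t
  have ge : add (mul e f) e = mul e f := by
    conv_rhs => rw [t1]
    symm
    calc add (add (mul e f) e) (mul e f)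
        = add (mul e f) (add e (mul e f)) := WeakBrace.add_assoc _ _ _
      _ = add (mul e f) (add (mul e f) e) := by rw [(addSg S).idem_comm he ga]
      _ = add (add (mul e f) (mul e f)) e := by rw [WeakBrace.add_assoc]
      _ = add (mul e f) e := by rw [ga]
  have t2 : mul e f = add (add (mul e f) f) (mul e f) := by
    have t := WeakBrace.distrib f e e
    rw [he, hnf, ← comm_m] at t
    exact t
  have gf : add (mul e f) f = mul e f := by
    conv_rhs => rw [t2]
    symm
    calc add (add (mul e f) f) (mul e f)
        = add (mul e f) (add f (mul e f)) := WeakBrace.add_assoc _ _ _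
      _ = add (mul e f) (add (mul e f) f) := by rw [(addSg S).idem_comm hf ga]
      _ = add (add (mul e f) (mul e f)) f := by rw [WeakBrace.add_assoc]
      _ = add (mul e f) f := by rw [ga]
  have hsum : add (add e f) (add e f) = add e f := (addSg S).idem_op he hf
  have msum : mul (add e f) (add e f) = add e f := mul_idem hsum
  have nsum : neg (add e f) = add e f := neg_idem hsum
  have c1 : mul (add e f) e = mul e f := by
    rw [(mulSg S).idem_comm (mul_idem hsum) me]
    have t := WeakBrace.distrib e e f
    rw [me, hne] at t
    -- t : mul e (add e f) = add (add e e) (mul e f)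
    rw [t, he]
    calc add e (mul e f) = add (mul e f) e := (addSg S).idem_comm he ga
      _ = mul e f := ge
  have c2 : mul (add e f) f = mul e f := by
    rw [(mulSg S).idem_comm (mul_idem hsum) mf]
    have t := WeakBrace.distrib f e f
    rw [mf, hnf, ← comm_m] at t
    -- t : mul f (add e f) = add (add (mul e f) f) f
    rw [t, gf, gf]
  have expand := WeakBrace.distrib (add e f) e f
  rw [c1, c2, nsum] at expand
  -- expand : mul (add e f) (add e f) = add (add (mul e f) (add e f)) (mul e f)
  rw [msum] at expand
  -- expand : add e f = add (add (mul e f) (add e f)) (mul e f)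
  rw [expand, ← WeakBrace.add_assoc, ge, gf, ga]


theorem distrib_ctx (z a x y : S) :
    add (add (add z (mul a x)) (neg a)) (mul a y) = add z (mul a (add x y)) := by
  have d : mul a (add x y) = add (mul a x) (add (neg a) (mul a y)) := by
    rw [WeakBrace.distrib, WeakBrace.add_assoc]
  rw [WeakBrace.add_assoc, WeakBrace.add_assoc, ← d]

theorem neg_mul (a b : S) :
    neg (mul a b) = add (add (neg a) (mul a (neg b))) (neg a) := by
  symm
  apply WeakBrace.neg_unique
  · -- add (add (mul a b) n) (mul a b) = mul a b
    simp only [← WeakBrace.add_assoc]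
    rw [← WeakBrace.distrib, ← WeakBrace.distrib, WeakBrace.add_reg]
  · -- add (add n (mul a b)) n = n
    simp only [← WeakBrace.add_assoc]
    rw [distrib_ctx, distrib_ctx, (addSg S).rg₁']

theorem sq_mul_idem {e : S} (he : add e e = e) (b : S) :
    add (mul e b) (neg (mul e b)) = add e (add b (neg b)) := by
  have hb0 : add (add b (neg b)) (add b (neg b)) = add b (neg b) := (addSg S).idem_op_iv b
  rw [neg_mul, ← WeakBrace.add_assoc, ← WeakBrace.add_assoc, ← WeakBrace.distrib,
    neg_idem he, idem_mul_eq_add he hb0]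
  -- goal : add (add e (add b (neg b))) e = add e (add b (neg b))
  rw [WeakBrace.add_assoc, (addSg S).idem_comm hb0 he, ← WeakBrace.add_assoc, he]

theorem left_abs {e : S} (he : add e e = e) (b : S) : add e (mul e b) = mul e b := by
  have h7 := sq_mul_idem he b
  have step : mul e b = add (add e (add b (neg b))) (mul e b) := by
    conv_lhs => rw [← WeakBrace.add_reg (mul e b)]
    rw [h7]
  calc add e (mul e b) = add e (add (add e (add b (neg b))) (mul e b)) := by rw [← step]
    _ = add (add e (add e (add b (neg b)))) (mul e b) := by rw [← WeakBrace.add_assoc]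
    _ = add (add e (add b (neg b))) (mul e b) := by rw [(addSg S).idem_cont he]
    _ = mul e b := step.symm

end WBAux

namespace WBAux
open WeakBrace
variable {S : Type*} [DualWeakBrace S]

theorem central_mul {e : S} (he : add e e = e) (a : S) : mul e a = mul a e :=
  (mulSg S).central DualWeakBrace.clifford (mul_idem he) a

theorem abs (a b : S) : add (add a (neg a)) (mul a b) = mul a b := by
  have hb0 : add (add b (neg b)) (add b (neg b)) = add b (neg b) := (addSg S).idem_op_iv b
  have ha0 : add (add a (neg a)) (add a (neg a)) = add a (neg a) := (addSg S).idem_op_iv a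
  have h7' := sq_mul_idem hb0 a
  -- h7' : add (mul f a) (neg (mul f a)) = add f (add a (neg a))  where f = b + neg b
  have stepf : mul (add b (neg b)) a
      = add (add (add b (neg b)) (add a (neg a))) (mul (add b (neg b)) a) := by
    conv_lhs => rw [← WeakBrace.add_reg (mul (add b (neg b)) a)]
    rw [h7']
  have key1 : add (add a (neg a)) (mul (add b (neg b)) a) = mul (add b (neg b)) a := by
    calc add (add a (neg a)) (mul (add b (neg b)) a)
        = add (add a (neg a)) (add (add (add b (neg b)) (add a (neg a)))
            (mul (add b (neg b)) a)) := by rw [← stepf]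
      _ = add (add (add (add a (neg a)) (add b (neg b))) (add a (neg a)))
            (mul (add b (neg b)) a) := by simp only [← WeakBrace.add_assoc]
      _ = add (add (add (add b (neg b)) (add a (neg a))) (add a (neg a)))
            (mul (add b (neg b)) a) := by rw [(addSg S).idem_comm ha0 hb0]
      _ = add (add (add b (neg b)) (add (add a (neg a)) (add a (neg a))))
            (mul (add b (neg b)) a) := by rw [WeakBrace.add_assoc (add b (neg b))]
      _ = add (add (add b (neg b)) (add a (neg a))) (mul (add b (neg b)) a) := by rw [ha0]
      _ = mul (add b (neg b)) a := stepf.symm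
  calc add (add a (neg a)) (mul a b)
      = add (add a (neg a)) (mul a (add (add b (neg b)) b)) := by rw [WeakBrace.add_reg]
    _ = add (add a (neg a)) (add (add (mul a (add b (neg b))) (neg a)) (mul a b)) := by
        rw [WeakBrace.distrib]
    _ = add (add a (neg a)) (add (add (mul (add b (neg b)) a) (neg a)) (mul a b)) := by
        rw [central_mul hb0 a]
    _ = add (add (add (add a (neg a)) (mul (add b (neg b)) a)) (neg a)) (mul a b) := by
        simp only [← WeakBrace.add_assoc]
    _ = add (add (mul (add b (neg b)) a) (neg a)) (mul a b) := by rw [key1]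
    _ = add (add (mul a (add b (neg b))) (neg a)) (mul a b) := by rw [← central_mul hb0 a]
    _ = mul a (add (add b (neg b)) b) := by rw [← WeakBrace.distrib]
    _ = mul a b := by rw [WeakBrace.add_reg]


theorem idem_mul_eq_add' {e : S} (he : add e e = e) (b : S) : mul e b = add e b := by
  have hne : neg e = e := neg_idem he
  have hb0 : add (add b (neg b)) (add b (neg b)) = add b (neg b) := (addSg S).idem_op_iv b
  have hcom : mul e b = mul b e := central_mul he b
  have Q1 : add (mul b e) (neg (mul b e)) = add (mul b e) (neg b) := by
    rw [neg_mul, hne]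
    -- goal : add (mul b e) (add (add (neg b) (mul b e)) (neg b)) = add (mul b e) (neg b)
    simp only [← WeakBrace.add_assoc]
    rw [← WeakBrace.distrib, he]
  have Q12 : add (mul b e) (neg b) = add e (add b (neg b)) := by
    rw [← Q1, ← hcom]
    exact sq_mul_idem he b
  have Q3 : add e (mul b e) = mul b e := by
    rw [← hcom]
    exact left_abs he b
  have h1 : add (add (add (neg b) e) (mul b e)) (add (neg b) e) = add (neg b) e := by
    calc add (add (add (neg b) e) (mul b e)) (add (neg b) e)
        = add (add (neg b) (add e (mul b e))) (add (neg b) e) := by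
          rw [WeakBrace.add_assoc (neg b) e (mul b e)]
      _ = add (add (neg b) (mul b e)) (add (neg b) e) := by rw [Q3]
      _ = add (neg b) (add (mul b e) (add (neg b) e)) := by rw [WeakBrace.add_assoc]
      _ = add (neg b) (add (add (mul b e) (neg b)) e) := by
          rw [← WeakBrace.add_assoc (mul b e) (neg b) e]
      _ = add (neg b) (add (add e (add b (neg b))) e) := by rw [Q12]
      _ = add (neg b) (add (add (add b (neg b)) e) e) := by rw [(addSg S).idem_comm he hb0]
      _ = add (neg b) (add (add b (neg b)) (add e e)) := by
          rw [WeakBrace.add_assoc (add b (neg b)) e e]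
      _ = add (neg b) (add (add b (neg b)) e) := by rw [he]
      _ = add (add (neg b) (add b (neg b))) e := by rw [← WeakBrace.add_assoc]
      _ = add (neg b) e := by rw [(addSg S).rg₁']
  have h2 : add (add (mul b e) (add (neg b) e)) (mul b e) = mul b e := by
    calc add (add (mul b e) (add (neg b) e)) (mul b e)
        = add (add (add (mul b e) (neg b)) e) (mul b e) := by
          rw [← WeakBrace.add_assoc (mul b e) (neg b) e]
      _ = add (add (mul b e) (neg b)) (add e (mul b e)) := by rw [WeakBrace.add_assoc]
      _ = add (add (mul b e) (neg b)) (mul b e) := by rw [Q3]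
      _ = add (add (mul b e) (neg (mul b e))) (mul b e) := by rw [← Q1]
      _ = mul b e := WeakBrace.add_reg (mul b e)
  have nu := WeakBrace.neg_unique (add (neg b) e) (mul b e) h1 h2
  rw [hcom, nu, (addSg S).iv_op, (addSg S).iv_iv, hne]

theorem add_cliff (a : S) : add a (neg a) = add (neg a) a := by
  have he' : add (add (neg a) a) (add (neg a) a) = add (neg a) a := (addSg S).idem_iv_op a
  have hh : add (add a (neg a)) (add a (neg a)) = add a (neg a) := (addSg S).idem_op_iv a
  have hg : mul (inv a) a = add (neg a) a := by
    rw [← DualWeakBrace.clifford a, WeakBrace.link]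
  have hg_add : add (mul (inv a) a) (mul (inv a) a) = mul (inv a) a :=
    add_idem_of_mul ((mulSg S).idem_iv_op a)
  have R1 : add (add (neg a) a) a = a := by
    rw [← hg, ← idem_mul_eq_add' hg_add a, central_mul hg_add a]
    exact (mulSg S).rg₁ a
  have R2 : add (add a (neg a)) (add (neg a) a) = add (neg a) a := by
    have t := abs a (inv a)
    rw [WeakBrace.link] at t
    exact t
  have R3 : add (add (neg a) a) (add a (neg a)) = add a (neg a) := by
    have t := congrArg (fun w => add w (neg a)) R1
    rw [WeakBrace.add_assoc] at t
    exact t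
  calc add a (neg a) = add (add (neg a) a) (add a (neg a)) := R3.symm
    _ = add (add a (neg a)) (add (neg a) a) := (addSg S).idem_comm he' hh
    _ = add (neg a) a := R2

theorem central_add {e : S} (he : add e e = e) (a : S) : add e a = add a e :=
  (addSg S).central add_cliff he a

end WBAux

open WeakBrace
theorem stmt8 {S : Type*} [DualWeakBrace S] (a b e : S) (he : IsIdem e) :
    cdot (add e a) b = add (cdot e b) (cdot a b) := by
  have he' : add e e = e := he
  have hb0 : add (add b (neg b)) (add b (neg b)) = add b (neg b) :=
    (WBAux.addSg S).idem_op_iv b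
  simp only [cdot]
  rw [(WBAux.addSg S).iv_op e a, WBAux.neg_idem he']
  rw [← WBAux.idem_mul_eq_add' he' a, WeakBrace.mul_assoc,
    WBAux.idem_mul_eq_add' he' (mul a b), WBAux.idem_mul_eq_add' he' b]
  simp only [WeakBrace.add_assoc]
  rw [(WBAux.addSg S).idem_cont he', (WBAux.addSg S).idem_cont he']
  rw [← WeakBrace.add_assoc (neg a) e, ← WBAux.central_add he' (neg a),
    WeakBrace.add_assoc e (neg a)]
  have habs : add (add b (neg b)) (add (neg a) (add (mul a b) (neg b)))
      = add (neg a) (add (mul a b) (neg b)) := by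
    rw [WBAux.central_add hb0 (add (neg a) (add (mul a b) (neg b)))]
    simp only [WeakBrace.add_assoc]
    rw [(WBAux.addSg S).rg₁' b]
  rw [← WeakBrace.add_assoc b (neg b) (add (neg a) (add (mul a b) (neg b))), habs]
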